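/- Suppose λ₁ ≤ ρ* ≤ λ₂ and let cΘ ∈ [0,1]. Let x and v be nonzero vectors with vᵀB x = 0, f(x) ≤ ρ*, and |vᵀA x| ≤ cΘ·‖v‖_A·‖x‖_A. Then 1/f(v) ≤ 1/λ₂ + 2(1/λ₁ − 1/λ₂)·cΘ² + 2(1/λ₁ − 1/ρ*). -/

import Mathlib

open Matrix Finset

section AuxLemmas

variable {m : ℕ}

private lemma symm_dot (A : Matrix (Fin m) (Fin m) ℝ) (hA : A.IsHermitian)
    (a b : Fin m → ℝ) : a ⬝ᵥ A *ᵥ b = b ⬝ᵥ A *ᵥ a := by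
  have hs : Aᵀ = A := by
    have h := hA.eq
    ext i j
    exact congrFun (congrFun h i) j
  rw [dotProduct_mulVec, ← mulVec_transpose, hs, dotProduct_comm]

/-- Cauchy–Schwarz for the quadratic form of a positive semidefinite matrix. -/
private lemma cs_psd {S : Matrix (Fin m) (Fin m) ℝ} (hS : S.PosSemidef) (a b : Fin m → ℝ) :
    (a ⬝ᵥ S *ᵥ b) ^ 2 ≤ (a ⬝ᵥ S *ᵥ a) * (b ⬝ᵥ S *ᵥ b) := by
  have hsym := symm_dot S hS.1 b a
  have key : ∀ t : ℝ, 0 ≤ (b ⬝ᵥ S *ᵥ b) * (t * t) + (2 * (a ⬝ᵥ S *ᵥ b)) * t + (a ⬝ᵥ S *ᵥ a) := by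
    intro t
    have h0 : (0 : ℝ) ≤ (a + t • b) ⬝ᵥ S *ᵥ (a + t • b) := by
      simpa using hS.dotProduct_mulVec_nonneg (a + t • b)
    simp only [mulVec_add, mulVec_smul, dotProduct_add, add_dotProduct, dotProduct_smul,
      smul_dotProduct, smul_eq_mul] at h0
    rw [hsym] at h0
    nlinarith [h0]
  have hd := discrim_le_zero key
  rw [discrim] at hd
  nlinarith [hd]

private lemma sum_dot (f : Fin m → Fin m → ℝ) (w : Fin m → ℝ) :
    (∑ i, f i) ⬝ᵥ w = ∑ i, f i ⬝ᵥ w := by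
  simp only [dotProduct, Finset.sum_apply, Finset.sum_mul]
  exact Finset.sum_comm

private lemma dot_sum (w : Fin m → ℝ) (f : Fin m → Fin m → ℝ) :
    w ⬝ᵥ (∑ i, f i) = ∑ i, w ⬝ᵥ f i := by
  simp only [dotProduct, Finset.sum_apply, Finset.mul_sum]
  exact Finset.sum_comm

private lemma sq_split (a b : ℝ) : a^2 ≤ 2*b^2 + 2*(a-b)^2 := by
  nlinarith [sq_nonneg (a - 2*b)]

private lemma mulVec_sum' (M : Matrix (Fin m) (Fin m) ℝ) (g : Fin m → Fin m → ℝ) :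
    M *ᵥ (∑ i, g i) = ∑ i, M *ᵥ g i := by
  have h := map_sum M.mulVecLin g Finset.univ
  simp only [mulVecLin_apply] at h
  exact h

private lemma dot_expand (S : Matrix (Fin m) (Fin m) ℝ) (c d : Fin m → ℝ)
    (u : Fin m → Fin m → ℝ) :
    (∑ i, c i • u i) ⬝ᵥ S *ᵥ (∑ j, d j • u j) =
      ∑ i, ∑ j, c i * d j * (u i ⬝ᵥ S *ᵥ u j) := by
  rw [mulVec_sum', sum_dot]
  refine Finset.sum_congr rfl fun i _ => ?_
  rw [dot_sum]
  refine Finset.sum_congr rfl fun j _ => ?_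
  rw [mulVec_smul, smul_dotProduct, dotProduct_smul]
  simp [smul_eq_mul]; ring

/-- Every vector is a linear combination of the M-orthonormal system u. -/
private lemma repr_exists (M : Matrix (Fin (m+2)) (Fin (m+2)) ℝ)
    (u : Fin (m+2) → Fin (m+2) → ℝ)
    (horth : ∀ i j, u i ⬝ᵥ M *ᵥ u j = if i = j then 1 else 0)
    (w : Fin (m+2) → ℝ) :
    ∃ c : Fin (m+2) → ℝ, w = ∑ i, c i • u i := by
  have key : ∀ (g : Fin (m+2) → ℝ) (j : Fin (m+2)),
      (∑ i, g i • u i) ⬝ᵥ (M *ᵥ u j) = g j := by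
    intro g j
    rw [sum_dot]
    simp only [smul_dotProduct, smul_eq_mul, horth]
    simp [Finset.sum_ite_eq', Finset.mem_univ]
  have hli : LinearIndependent ℝ u := by
    rw [Fintype.linearIndependent_iff]
    intro g hg j
    have h1 := key g j
    rw [hg] at h1
    simpa using h1.symm
  have hcard : Fintype.card (Fin (m+2)) = Module.finrank ℝ (Fin (m+2) → ℝ) := by
    simp [Module.finrank_fintype_fun_eq_card]
  have hspan := hli.span_eq_top_of_card_eq_finrank hcard
  have hw : w ∈ Submodule.span ℝ (Set.range u) := hspan ▸ Submodule.mem_top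
  rcases (Finsupp.mem_span_range_iff_exists_finsupp).mp hw with ⟨c, hc⟩
  refine ⟨fun i => c i, ?_⟩
  rw [← hc]
  simp [Finsupp.sum_fintype]

/-- Spectral bound on the M-orthogonal complement of u 0. -/
private lemma spectral (A M : Matrix (Fin (m+2)) (Fin (m+2)) ℝ)
    (lam : Fin (m+2) → ℝ) (u : Fin (m+2) → Fin (m+2) → ℝ)
    (hmono : Monotone lam)
    (heig : ∀ i, A *ᵥ u i = lam i • (M *ᵥ u i))
    (horth : ∀ i j, u i ⬝ᵥ M *ᵥ u j = if i = j then 1 else 0)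
    (w : Fin (m+2) → ℝ) (hw0 : w ⬝ᵥ M *ᵥ u 0 = 0) :
    lam 1 * (w ⬝ᵥ M *ᵥ w) ≤ w ⬝ᵥ A *ᵥ w := by
  obtain ⟨c, hc⟩ := repr_exists M u horth w
  have hc0 : c 0 = 0 := by
    rw [hc, sum_dot] at hw0
    simp only [smul_dotProduct, smul_eq_mul, horth] at hw0
    simpa [Finset.sum_ite_eq', Finset.mem_univ] using hw0
  have hAu : ∀ i j, u i ⬝ᵥ A *ᵥ u j = if i = j then lam j else 0 := by
    intro i j
    rw [heig j, dotProduct_smul, smul_eq_mul, horth]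
    by_cases h : i = j <;> simp [h]
  have hMw : w ⬝ᵥ M *ᵥ w = ∑ i, (c i)^2 := by
    rw [hc, dot_expand]
    simp only [horth, mul_ite, mul_one, mul_zero]
    refine Finset.sum_congr rfl fun i _ => ?_
    simp [Finset.sum_ite_eq', Finset.mem_univ, sq]
  have hAw : w ⬝ᵥ A *ᵥ w = ∑ i, lam i * (c i)^2 := by
    rw [hc, dot_expand]
    simp only [hAu, mul_ite, mul_zero]
    refine Finset.sum_congr rfl fun i _ => ?_
    simp [Finset.sum_ite_eq', Finset.mem_univ, sq]
    ring
  rw [hMw, hAw, Finset.mul_sum]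
  refine Finset.sum_le_sum fun i _ => ?_
  by_cases h : i = 0
  · subst h; simp [hc0]
  · have h1 : (1 : Fin (m+2)) ≤ i := by
      rw [Fin.le_def]
      have hne : (i : ℕ) ≠ 0 := fun hcon => h (Fin.ext hcon)
      have : 1 ≤ (i : ℕ) := Nat.one_le_iff_ne_zero.mpr hne
      simpa using this
    have := hmono h1
    nlinarith [sq_nonneg (c i)]

end AuxLemmas

set_option maxHeartbeats 2000000 in
/-- Bound on the reciprocal Rayleigh quotient of B-orthogonal directions. -/
theorem statement_10 {n : ℕ}
    (A M B : Matrix (Fin (n+2)) (Fin (n+2)) ℝ)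
    (hA : A.PosDef) (hM : M.PosDef) (hB : B.PosDef)
    (lam : Fin (n+2) → ℝ) (u : Fin (n+2) → (Fin (n+2) → ℝ))
    (hlam_pos : 0 < lam 0) (hgap : lam 0 < lam 1) (hmono : Monotone lam)
    (heig : ∀ i, A *ᵥ u i = lam i • (M *ᵥ u i))
    (horth : ∀ i j, u i ⬝ᵥ M *ᵥ u j = if i = j then 1 else 0)
    (ρstar : ℝ) (hρ1 : lam 0 ≤ ρstar) (hρ2 : ρstar ≤ lam 1)
    (cΘ : ℝ) (hcΘ0 : 0 ≤ cΘ) (hcΘ1 : cΘ ≤ 1)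
    (x v : Fin (n+2) → ℝ) (hx : x ≠ 0) (hv : v ≠ 0)
    (hvBx : v ⬝ᵥ B *ᵥ x = 0)
    (hfx : (x ⬝ᵥ A *ᵥ x) / (x ⬝ᵥ M *ᵥ x) ≤ ρstar)
    (hangle : |v ⬝ᵥ A *ᵥ x| ≤ cΘ * Real.sqrt (v ⬝ᵥ A *ᵥ v) * Real.sqrt (x ⬝ᵥ A *ᵥ x)) :
    ((v ⬝ᵥ A *ᵥ v) / (v ⬝ᵥ M *ᵥ v))⁻¹ ≤
      1 / lam 1 + 2 * (1 / lam 0 - 1 / lam 1) * cΘ ^ 2 + 2 * (1 / lam 0 - 1 / ρstar) := by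
  set l0 := lam 0 with hl0
  set l1 := lam 1 with hl1
  set V := v ⬝ᵥ A *ᵥ v with hVdef
  set Wm := v ⬝ᵥ M *ᵥ v with hWdef
  set T := x ⬝ᵥ A *ᵥ x with hTdef
  set Xm := x ⬝ᵥ M *ᵥ x with hXdef
  set c := v ⬝ᵥ M *ᵥ u 0 with hcdef
  set d := x ⬝ᵥ M *ᵥ u 0 with hddef
  have hV : 0 < V := by simpa using hA.dotProduct_mulVec_pos hv
  have hWm : 0 < Wm := by simpa using hM.dotProduct_mulVec_pos hv
  have hT : 0 < T := by simpa using hA.dotProduct_mulVec_pos hx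
  have hXm : 0 < Xm := by simpa using hM.dotProduct_mulVec_pos hx
  have hρ0 : 0 < ρstar := lt_of_lt_of_le hlam_pos hρ1
  have hl1pos : 0 < l1 := hlam_pos.trans hgap
  -- basic eigenvector identities
  have hu0M : u 0 ⬝ᵥ M *ᵥ u 0 = 1 := by simpa using horth 0 0
  have hvAu0 : v ⬝ᵥ A *ᵥ u 0 = l0 * c := by
    rw [heig 0, dotProduct_smul, smul_eq_mul]
  have hxAu0 : x ⬝ᵥ A *ᵥ u 0 = l0 * d := by
    rw [heig 0, dotProduct_smul, smul_eq_mul]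
  have hu0A : u 0 ⬝ᵥ A *ᵥ u 0 = l0 := by
    rw [heig 0, dotProduct_smul, smul_eq_mul, hu0M, mul_one]
  have hsymM := fun a b => symm_dot M hM.1 a b
  have hsymA := fun a b => symm_dot A hA.1 a b
  -- Fact 1 : spectral bound for v
  have F1 : l1 * (Wm - c^2) ≤ V - l0 * c^2 := by
    have hw0 : (v - c • u 0) ⬝ᵥ M *ᵥ u 0 = 0 := by
      rw [sub_dotProduct, smul_dotProduct, smul_eq_mul, hu0M]
      simp [hcdef]
    have hsp := spectral A M lam u hmono heig horth (v - c • u 0) hw0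
    have hMexp : (v - c • u 0) ⬝ᵥ M *ᵥ (v - c • u 0) = Wm - c^2 := by
      rw [mulVec_sub, mulVec_smul, dotProduct_sub, sub_dotProduct, sub_dotProduct,
        dotProduct_smul, smul_dotProduct, dotProduct_smul, smul_dotProduct]
      have h1 : u 0 ⬝ᵥ M *ᵥ v = c := by rw [hsymM (u 0) v]
      simp only [smul_eq_mul, h1, hu0M, ← hcdef, ← hWdef]
      ring
    have hAexp : (v - c • u 0) ⬝ᵥ A *ᵥ (v - c • u 0) = V - l0 * c^2 := by
      rw [mulVec_sub, mulVec_smul, dotProduct_sub, sub_dotProduct, sub_dotProduct,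
        dotProduct_smul, smul_dotProduct, dotProduct_smul, smul_dotProduct]
      have h1 : u 0 ⬝ᵥ A *ᵥ v = l0 * c := by rw [hsymA (u 0) v, hvAu0]
      simp only [smul_eq_mul, h1, hu0A, hvAu0, ← hVdef]
      ring
    rw [hMexp, hAexp] at hsp
    exact hsp
  -- Fact 2 : spectral bound for x
  have F2 : l1 * (Xm - d^2) ≤ T - l0 * d^2 := by
    have hw0 : (x - d • u 0) ⬝ᵥ M *ᵥ u 0 = 0 := by
      rw [sub_dotProduct, smul_dotProduct, smul_eq_mul, hu0M]
      simp [hddef]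
    have hsp := spectral A M lam u hmono heig horth (x - d • u 0) hw0
    have hMexp : (x - d • u 0) ⬝ᵥ M *ᵥ (x - d • u 0) = Xm - d^2 := by
      rw [mulVec_sub, mulVec_smul, dotProduct_sub, sub_dotProduct, sub_dotProduct,
        dotProduct_smul, smul_dotProduct, dotProduct_smul, smul_dotProduct]
      have h1 : u 0 ⬝ᵥ M *ᵥ x = d := by rw [hsymM (u 0) x]
      simp only [smul_eq_mul, h1, hu0M, ← hddef, ← hXdef]
      ring
    have hAexp : (x - d • u 0) ⬝ᵥ A *ᵥ (x - d • u 0) = T - l0 * d^2 := by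
      rw [mulVec_sub, mulVec_smul, dotProduct_sub, sub_dotProduct, sub_dotProduct,
        dotProduct_smul, smul_dotProduct, dotProduct_smul, smul_dotProduct]
      have h1 : u 0 ⬝ᵥ A *ᵥ x = l0 * d := by rw [hsymA (u 0) x, hxAu0]
      simp only [smul_eq_mul, h1, hu0A, hxAu0, ← hTdef]
      ring
    rw [hMexp, hAexp] at hsp
    exact hsp
  -- Fact 4 : Rayleigh quotient bound for x
  have F4 : T ≤ ρstar * Xm := by
    have := (div_le_iff₀ hXm).mp hfx
    linarith
  -- Fact 5 : l0 d² ≤ T (Cauchy–Schwarz)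
  have F5 : l0 * d^2 ≤ T := by
    have hcs := cs_psd hA.posSemidef x (u 0)
    rw [hxAu0, hu0A] at hcs
    have h2 : l0 * (l0 * d^2) ≤ l0 * T := by nlinarith [hcs]
    exact le_of_mul_le_mul_left h2 hlam_pos
  have hE : 0 ≤ T - l0 * d^2 := by linarith
  -- Fact 3 : angle decomposition
  have F3 : l0 * c^2 * T ≤ 2 * cΘ^2 * V * T + 2 * V * (T - l0 * d^2) := by
    set z : Fin (n+2) → ℝ := u 0 - (l0 * d / T) • x with hzdef
    have hzAz : z ⬝ᵥ A *ᵥ z = l0 * (T - l0 * d^2) / T := by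
      rw [hzdef, mulVec_sub, mulVec_smul, dotProduct_sub, sub_dotProduct, sub_dotProduct,
        dotProduct_smul, smul_dotProduct, dotProduct_smul, smul_dotProduct]
      have h1 : u 0 ⬝ᵥ A *ᵥ x = l0 * d := by rw [hsymA (u 0) x, hxAu0]
      have h2 : x ⬝ᵥ A *ᵥ u 0 = l0 * d := hxAu0
      simp only [smul_eq_mul, h1, h2, hu0A, ← hTdef]
      field_simp
      ring
    have hvAz : v ⬝ᵥ A *ᵥ z = l0 * c - (l0 * d / T) * (v ⬝ᵥ A *ᵥ x) := by
      rw [hzdef, mulVec_sub, mulVec_smul, dotProduct_sub, dotProduct_smul, smul_eq_mul, hvAu0]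
    have hcs := cs_psd hA.posSemidef v z
    rw [hvAz, hzAz, ← hVdef] at hcs
    have hP2 : (v ⬝ᵥ A *ᵥ x)^2 ≤ cΘ^2 * V * T := by
      have h1 : (v ⬝ᵥ A *ᵥ x)^2 = |v ⬝ᵥ A *ᵥ x|^2 := (sq_abs _).symm
      have h3 := mul_self_le_mul_self (abs_nonneg _) hangle
      rw [h1]
      calc |v ⬝ᵥ A *ᵥ x|^2 = |v ⬝ᵥ A *ᵥ x| * |v ⬝ᵥ A *ᵥ x| := sq _
        _ ≤ (cΘ * Real.sqrt V * Real.sqrt T) * (cΘ * Real.sqrt V * Real.sqrt T) := h3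
        _ = cΘ^2 * (Real.sqrt V * Real.sqrt V) * (Real.sqrt T * Real.sqrt T) := by ring
        _ = cΘ^2 * V * T := by
            rw [Real.mul_self_sqrt hV.le, Real.mul_self_sqrt hT.le]
    set P := v ⬝ᵥ A *ᵥ x with hPdef
    have key : (l0 * c - (l0 * d / T) * P)^2 ≤ V * (l0 * (T - l0 * d^2) / T) := hcs
    have expand : (l0 * c)^2 ≤ 2 * ((l0 * d / T) * P)^2 + 2 * (l0 * c - (l0 * d / T) * P)^2 := by
      have := sq_split (l0 * c) ((l0 * d / T) * P)
      linarith
    have hb1 : ((l0 * d / T) * P)^2 ≤ (l0 * d / T)^2 * (cΘ^2 * V * T) := by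
      rw [mul_pow]
      exact mul_le_mul_of_nonneg_left hP2 (sq_nonneg _)
    have hdT : (l0 * d / T)^2 * T ≤ l0 := by
      have h1 : (l0 * d / T)^2 * T = (l0 * (l0 * d^2)) / T := by
        field_simp
      rw [h1]
      rw [div_le_iff₀ hT]
      have := mul_le_mul_of_nonneg_left F5 hlam_pos.le
      linarith
    have step : (l0 * c)^2 ≤ 2 * cΘ^2 * V * l0 + 2 * V * (l0 * (T - l0 * d^2) / T) := by
      have h2 : (l0 * d / T)^2 * (cΘ^2 * V * T) = ((l0 * d / T)^2 * T) * (cΘ^2 * V) := by ring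
      have h3 : ((l0 * d / T)^2 * T) * (cΘ^2 * V) ≤ l0 * (cΘ^2 * V) := by
        apply mul_le_mul_of_nonneg_right hdT
        positivity
      linarith [key, hb1, expand, h3, h2.le, h2.ge]
    have hfin : l0 * (l0 * c^2 * T) ≤ l0 * (2 * cΘ^2 * V * T + 2 * V * (T - l0 * d^2)) := by
      have hstep := mul_le_mul_of_nonneg_right step hT.le
      have heq : (2 * cΘ^2 * V * l0 + 2 * V * (l0 * (T - l0 * d^2) / T)) * T =
          l0 * (2 * cΘ^2 * V * T + 2 * V * (T - l0 * d^2)) := by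
        field_simp
      calc l0 * (l0 * c^2 * T) = (l0 * c)^2 * T := by ring
        _ ≤ (2 * cΘ^2 * V * l0 + 2 * V * (l0 * (T - l0 * d^2) / T)) * T := hstep
        _ = l0 * (2 * cΘ^2 * V * T + 2 * V * (T - l0 * d^2)) := heq
    exact le_of_mul_le_mul_left hfin hlam_pos
  -- Fact 6 : combined spectral/Rayleigh bound
  have F6 : (l1 - l0) * ρstar * (T - l0 * d^2) ≤ (ρstar - l0) * l1 * T := by
    have h3 : l1 * T ≤ ρstar * (l1 * d^2 + (T - l0 * d^2)) := by
      have h1 : l1 * T ≤ l1 * (ρstar * Xm) := mul_le_mul_of_nonneg_left F4 hl1pos.le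
      have h2 : ρstar * (l1 * Xm) ≤ ρstar * (l1 * d^2 + (T - l0 * d^2)) := by
        apply mul_le_mul_of_nonneg_left _ hρ0.le
        linarith [F2]
      calc l1 * T ≤ l1 * (ρstar * Xm) := h1
        _ = ρstar * (l1 * Xm) := by ring
        _ ≤ _ := h2
    have h4 := mul_le_mul_of_nonneg_left h3 hlam_pos.le
    nlinarith [h4]
  -- Final assembly
  rw [inv_div, div_le_iff₀ hV]
  have hRP : 1 / l1 + 2 * (1 / l0 - 1 / l1) * cΘ ^ 2 + 2 * (1 / l0 - 1 / ρstar) =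
      (l0 * ρstar + 2 * (l1 - l0) * ρstar * cΘ^2 + 2 * l1 * (ρstar - l0)) / (l0 * l1 * ρstar) := by
    field_simp
  rw [hRP, div_mul_eq_mul_div, le_div_iff₀ (by positivity)]
  have key : l0 * l1 * ρstar * Wm ≤
      V * (l0 * ρstar + 2 * (l1 - l0) * ρstar * cΘ^2 + 2 * l1 * (ρstar - l0)) := by
    have hA1 : l0 * ρstar * (l1 * Wm) ≤ l0 * ρstar * (V + (l1 - l0) * c^2) := by
      apply mul_le_mul_of_nonneg_left _ (by positivity)
      linarith [F1]
    have hB1 : ρstar * (l1 - l0) * (l0 * c^2) * T ≤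
        (2 * ρstar * (l1 - l0) * cΘ^2 * V + 2 * V * ((ρstar - l0) * l1)) * T := by
      have h1 : ρstar * (l1 - l0) * (l0 * c^2 * T) ≤
          ρstar * (l1 - l0) * (2 * cΘ^2 * V * T + 2 * V * (T - l0 * d^2)) := by
        apply mul_le_mul_of_nonneg_left F3
        have : (0:ℝ) < l1 - l0 := by linarith
        positivity
      have h2 : 2 * V * ((l1 - l0) * ρstar * (T - l0 * d^2)) ≤
          2 * V * ((ρstar - l0) * l1 * T) :=
        mul_le_mul_of_nonneg_left F6 (by positivity)
      nlinarith [h1, h2]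
    have hB : ρstar * (l1 - l0) * (l0 * c^2) ≤
        2 * ρstar * (l1 - l0) * cΘ^2 * V + 2 * V * ((ρstar - l0) * l1) :=
      le_of_mul_le_mul_right hB1 hT
    nlinarith [hA1, hB]
  linarith [key]
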